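/- arXiv:1804.10863 — 3 statements merged into one kernel-verified Lean document; each statement's English description precedes it below -/
import Mathlib

section
/- There exists a constant C > 0 such that for every ζ ∈ [−N, 0) and every k ∈ ℂ ∖ [−k₀, k₀] with |k + k₀| ≥ k₀/2, one has |χ(ζ,k)| ≤ C. (This is the paper's Lemma 3.1: χ(ζ,·) is uniformly bounded, with respect to ζ ∈ I, on the complement of the disk of radius k₀/2 around −k₀.) -/
open Set MeasureTheory

noncomputable section

/-- `k₀(ζ) = √(-ζ/12)`. -/
def k0 (ζ : ℝ) : ℝ := Real.sqrt (-ζ / 12)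

/-- `χ(ζ,k) = (1/(2πi)) ∫_{-k₀}^{k₀} (L(s) - L(k₀))/(s - k) ds`. -/
def chi (L : ℝ → ℂ) (ζ : ℝ) (k : ℂ) : ℂ :=
  (2 * Real.pi * Complex.I)⁻¹ *
    ∫ s in (-(k0 ζ))..(k0 ζ), (L s - L (k0 ζ)) / ((s : ℂ) - k)

lemma abs_log_sub_log_le (A B : ℂ) :
    ‖Complex.log A - Complex.log B‖ ≤
      |Real.log (‖A‖) - Real.log (‖B‖)| + 2 * Real.pi := by
  have h := Complex.norm_le_abs_re_add_abs_im (Complex.log A - Complex.log B)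
  have hre : (Complex.log A - Complex.log B).re
      = Real.log (‖A‖) - Real.log (‖B‖) := by
    simp [Complex.sub_re, Complex.log_re]
  have him : (Complex.log A - Complex.log B).im = A.arg - B.arg := by
    simp [Complex.sub_im, Complex.log_im]
  have hA' := Complex.abs_arg_le_pi A
  have hB' := Complex.abs_arg_le_pi B
  rw [abs_le] at hA' hB'
  have h1 : |A.arg - B.arg| ≤ 2 * Real.pi := by
    rw [abs_le]; constructor <;> linarith [hA'.1, hA'.2, hB'.1, hB'.2]
  calc ‖Complex.log A - Complex.log B‖
      ≤ |(Complex.log A - Complex.log B).re| + |(Complex.log A - Complex.log B).im| := h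
    _ = |Real.log (‖A‖) - Real.log (‖B‖)| + |A.arg - B.arg| := by
        rw [hre, him]
    _ ≤ |Real.log (‖A‖) - Real.log (‖B‖)| + 2 * Real.pi := by linarith

lemma clamp_le {a r s : ℝ} (hs : s ∈ Icc (-a) a) :
    |s - max (-a) (min a r)| ≤ |s - r| := by
  obtain ⟨h1, h2⟩ := hs
  rcases le_total r (-a) with h | h
  · rw [min_eq_right (le_trans h (by linarith)), max_eq_left h,
      abs_of_nonneg (by linarith), abs_of_nonneg (by linarith)]
    linarith
  · rcases le_total a r with h' | h'
    · rw [min_eq_left h', max_eq_right (by linarith),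
        abs_of_nonpos (by linarith), abs_of_nonpos (by linarith)]
      linarith
    · rw [min_eq_right h', max_eq_right h]

lemma integral_inv_eq (a : ℝ) (ha : 0 < a) (k : ℂ)
    (hk : ∀ s : ℝ, s ∈ Icc (-a) a → (s : ℂ) ≠ k) :
    ∃ A B : ℂ, ‖A‖ = ‖k - (a : ℂ)‖ ∧
      ‖B‖ = ‖k + (a : ℂ)‖ ∧
      (∫ s in (-a)..a, ((s : ℂ) - k)⁻¹) = Complex.log A - Complex.log B := by
  have haa : -a ≤ a := by linarith
  have hsub : ∀ s ∈ uIcc (-a) a, (s : ℂ) - k ≠ 0 := by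
    intro s hs
    rw [uIcc_of_le haa] at hs
    exact sub_ne_zero.2 (hk s hs)
  have hint : IntervalIntegrable (fun s : ℝ => ((s : ℂ) - k)⁻¹) volume (-a) a :=
    (((Complex.continuous_ofReal.continuousOn).sub continuousOn_const).inv₀ hsub).intervalIntegrable
  by_cases him : k.im = 0
  · have hkre : ((k.re : ℝ) : ℂ) = k := Complex.ext rfl (by simp [him])
    have hnotin : k.re ∉ Icc (-a) a := fun h => hk k.re h hkre
    rw [mem_Icc, not_and_or, not_le, not_le] at hnotin
    rcases hnotin with h | h
    · -- k.re < -a : antiderivative log (z - k)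
      refine ⟨(a : ℂ) - k, ((-a : ℝ) : ℂ) - k, ?_, ?_, ?_⟩
      · rw [← neg_sub, norm_neg]
      · rw [show ((-a : ℝ) : ℂ) - k = -(k + (a : ℂ)) by push_cast; ring, norm_neg]
      · have key : ∀ s ∈ uIcc (-a) a,
            HasDerivAt (fun x : ℝ => Complex.log ((x : ℂ) - k)) (((s : ℂ) - k)⁻¹) s := by
          intro s hs
          rw [uIcc_of_le haa] at hs
          have hslit : (s : ℂ) - k ∈ Complex.slitPlane := by
            rw [Complex.mem_slitPlane_iff]
            left
            simp only [Complex.sub_re, Complex.ofReal_re]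
            linarith [hs.1]
          have h1 : HasDerivAt (fun z : ℂ => Complex.log (z - k)) (((s : ℂ) - k)⁻¹) (s : ℂ) := by
            simpa [Function.comp_def] using (Complex.hasDerivAt_log hslit).comp (s : ℂ)
              ((hasDerivAt_id ((s : ℂ))).sub_const k)
          exact h1.comp_ofReal
        exact intervalIntegral.integral_eq_sub_of_hasDerivAt key hint
    · -- a < k.re : antiderivative log (k - z)
      refine ⟨k - (a : ℂ), k - ((-a : ℝ) : ℂ), rfl, ?_, ?_⟩
      · rw [show k - ((-a : ℝ) : ℂ) = k + (a : ℂ) by push_cast; ring]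
      · have key : ∀ s ∈ uIcc (-a) a,
            HasDerivAt (fun x : ℝ => Complex.log (k - (x : ℂ))) (((s : ℂ) - k)⁻¹) s := by
          intro s hs
          rw [uIcc_of_le haa] at hs
          have hslit : k - (s : ℂ) ∈ Complex.slitPlane := by
            rw [Complex.mem_slitPlane_iff]
            left
            simp only [Complex.sub_re, Complex.ofReal_re]
            linarith [hs.2]
          have h1 : HasDerivAt (fun z : ℂ => Complex.log (k - z)) (((s : ℂ) - k)⁻¹) (s : ℂ) := by
            have h2 := (Complex.hasDerivAt_log hslit).comp (s : ℂ)
              ((hasDerivAt_id ((s : ℂ))).const_sub k)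
            have h3 : (k - (s : ℂ))⁻¹ * (-1) = ((s : ℂ) - k)⁻¹ := by
              rw [show ((s : ℂ) - k) = -(k - (s : ℂ)) by ring, inv_neg]; ring
            simpa [h3, Function.comp_def] using h2
          exact h1.comp_ofReal
        exact intervalIntegral.integral_eq_sub_of_hasDerivAt key hint
  · -- k.im ≠ 0 : antiderivative log (z - k)
    refine ⟨(a : ℂ) - k, ((-a : ℝ) : ℂ) - k, ?_, ?_, ?_⟩
    · rw [← neg_sub, norm_neg]
    · rw [show ((-a : ℝ) : ℂ) - k = -(k + (a : ℂ)) by push_cast; ring, norm_neg]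
    · have key : ∀ s ∈ uIcc (-a) a,
          HasDerivAt (fun x : ℝ => Complex.log ((x : ℂ) - k)) (((s : ℂ) - k)⁻¹) s := by
        intro s hs
        have hslit : (s : ℂ) - k ∈ Complex.slitPlane := by
          rw [Complex.mem_slitPlane_iff]
          right
          simp only [Complex.sub_im, Complex.ofReal_im, zero_sub]
          exact neg_ne_zero.2 him
        have h1 : HasDerivAt (fun z : ℂ => Complex.log (z - k)) (((s : ℂ) - k)⁻¹) (s : ℂ) := by
          simpa [Function.comp_def] using (Complex.hasDerivAt_log hslit).comp (s : ℂ)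
            ((hasDerivAt_id ((s : ℂ))).sub_const k)
        exact h1.comp_ofReal
      exact intervalIntegral.integral_eq_sub_of_hasDerivAt key hint

set_option maxHeartbeats 1000000 in
/-- Lemma 3.1: χ(ζ,·) is uniformly bounded, w.r.t. ζ ∈ I = [-N,0), on the
complement of the disk of radius k₀/2 around -k₀ (and off the segment [-k₀,k₀]). -/
theorem chi_uniformly_bounded (N : ℝ) (hN : 0 < N) (L : ℝ → ℂ)
    (hL : ContDiffOn ℝ 1 L (Icc (-Real.sqrt (N / 12)) (Real.sqrt (N / 12))))
    (hsym : ∀ s ∈ Icc (-Real.sqrt (N / 12)) (Real.sqrt (N / 12)),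
      L (-s) = starRingEnd ℂ (L s)) :
    ∃ C : ℝ, 0 < C ∧ ∀ ζ ∈ Ico (-N) (0 : ℝ), ∀ k : ℂ,
      k ∉ (fun s : ℝ => (s : ℂ)) '' Icc (-(k0 ζ)) (k0 ζ) →
      k0 ζ / 2 ≤ ‖k + (k0 ζ : ℂ)‖ →
      ‖chi L ζ k‖ ≤ C := by
  set K := Real.sqrt (N / 12) with hKdef
  have hK0 : 0 < K := Real.sqrt_pos.2 (by positivity)
  have hudiff : UniqueDiffOn ℝ (Icc (-K) K) := uniqueDiffOn_Icc (by linarith)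
  have hdiff : DifferentiableOn ℝ L (Icc (-K) K) := hL.differentiableOn one_ne_zero
  have hcontd : ContinuousOn (derivWithin L (Icc (-K) K)) (Icc (-K) K) :=
    hL.continuousOn_derivWithin hudiff le_rfl
  obtain ⟨M, hM⟩ := (isCompact_Icc).exists_bound_of_continuousOn hcontd
  have hM0 : 0 ≤ M := le_trans (norm_nonneg _) (hM 0 ⟨by linarith, by linarith⟩)
  have hlip : ∀ x ∈ Icc (-K) K, ∀ y ∈ Icc (-K) K, ‖L y - L x‖ ≤ M * |y - x| := by
    intro x hx y hy
    have := Convex.norm_image_sub_le_of_norm_derivWithin_le hdiff hM (convex_Icc _ _) hx hy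
    simpa [Real.norm_eq_abs] using this
  refine ⟨26 * (M + 1) * (K + 1), by positivity, ?_⟩
  intro ζ hζ k hknot hkfar
  obtain ⟨hζ1, hζ2⟩ := hζ
  set a := k0 ζ with hadef
  have ha : 0 < a := Real.sqrt_pos.2 (by linarith)
  have haK : a ≤ K := Real.sqrt_le_sqrt (by linarith)
  have hsubset : Icc (-a) a ⊆ Icc (-K) K := Icc_subset_Icc (by linarith) haK
  have hk : ∀ s : ℝ, s ∈ Icc (-a) a → (s : ℂ) ≠ k := fun s hs h => hknot ⟨s, hs, h⟩
  set σ := max (-a) (min a k.re) with hσdef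
  have hσ : σ ∈ Icc (-a) a := ⟨le_max_left _ _, max_le (by linarith) (min_le_left _ _)⟩
  have hσ0 : 0 ≤ a - σ := by linarith [hσ.2]
  have hσ2a : a - σ ≤ 2 * a := by linarith [hσ.1]
  set t := ‖k - (a : ℂ)‖ with htdef
  set u := ‖k + (a : ℂ)‖ with hudef
  have ht : 0 < t := by
    refine norm_pos_iff.mpr (sub_ne_zero.2 fun h => ?_)
    exact hk a ⟨by linarith, le_refl a⟩ h.symm
  have hu : a / 2 ≤ u := hkfar
  have hu0 : 0 < u := lt_of_lt_of_le (by linarith) hu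
  have htre : |a - k.re| ≤ t := by
    have h1 := Complex.abs_re_le_norm ((a : ℂ) - k)
    have h2 : ‖(a : ℂ) - k‖ = t := by rw [← neg_sub, norm_neg]
    simp only [Complex.sub_re, Complex.ofReal_re] at h1
    linarith [h1, h2.symm.le, h2.le]
  have hσa : a - σ ≤ t := by
    have h1 : min a k.re ≤ σ := le_max_right _ _
    rcases le_total a k.re with h | h
    · rw [min_eq_left h] at h1
      linarith [ht.le]
    · rw [min_eq_right h] at h1
      have : a - σ ≤ a - k.re := by linarith
      calc a - σ ≤ a - k.re := this
        _ ≤ |a - k.re| := le_abs_self _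
        _ ≤ t := htre
  have hut : u ≤ t + 2 * a := by
    have h1 : k + (a : ℂ) = (k - (a : ℂ)) + ((2 * a : ℝ) : ℂ) := by push_cast; ring
    calc u = ‖(k - (a : ℂ)) + ((2 * a : ℝ) : ℂ)‖ := by rw [hudef, h1]
      _ ≤ t + ‖((2 * a : ℝ) : ℂ)‖ := norm_add_le _ _
      _ = t + 2 * a := by rw [Complex.norm_real, Real.norm_eq_abs, abs_of_nonneg (by linarith)]
  have htu : t ≤ u + 2 * a := by
    have h1 : k - (a : ℂ) = (k + (a : ℂ)) + ((-(2 * a) : ℝ) : ℂ) := by push_cast; ring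
    calc t = ‖(k + (a : ℂ)) + ((-(2 * a) : ℝ) : ℂ)‖ := by rw [htdef, h1]
      _ ≤ u + ‖((-(2 * a) : ℝ) : ℂ)‖ := norm_add_le _ _
      _ = u + 2 * a := by rw [Complex.norm_real, Real.norm_eq_abs, abs_neg, abs_of_nonneg (by linarith)]
  -- Lipschitz bound for the constant term
  have hc : ‖L σ - L a‖ ≤ M * (a - σ) := by
    have := hlip a (hsubset ⟨by linarith, le_refl a⟩) σ (hsubset hσ)
    rwa [abs_of_nonpos (by linarith [hσ.2]), neg_sub] at this
  -- continuity and integrability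
  have haa : -a ≤ a := by linarith
  have huIcc : uIcc (-a) a = Icc (-a) a := uIcc_of_le haa
  have hden : ContinuousOn (fun s : ℝ => (s : ℂ) - k) (uIcc (-a) a) :=
    (Complex.continuous_ofReal.continuousOn).sub continuousOn_const
  have hdenne : ∀ s ∈ uIcc (-a) a, (s : ℂ) - k ≠ 0 := by
    intro s hs; rw [huIcc] at hs; exact sub_ne_zero.2 (hk s hs)
  have hLc : ContinuousOn L (uIcc (-a) a) := by
    rw [huIcc]; exact (hL.continuousOn).mono hsubset
  have hcont1 : ContinuousOn (fun s : ℝ => (L s - L σ) / ((s : ℂ) - k)) (uIcc (-a) a) :=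
    (hLc.sub continuousOn_const).div hden hdenne
  have hint1 : IntervalIntegrable (fun s : ℝ => (L s - L σ) / ((s : ℂ) - k)) volume (-a) a :=
    hcont1.intervalIntegrable
  have hcont2 : ContinuousOn (fun s : ℝ => ((s : ℂ) - k)⁻¹) (uIcc (-a) a) := hden.inv₀ hdenne
  have hint2 : IntervalIntegrable (fun s : ℝ => ((s : ℂ) - k)⁻¹) volume (-a) a :=
    hcont2.intervalIntegrable
  have hint2' : IntervalIntegrable (fun s : ℝ => (L σ - L a) * ((s : ℂ) - k)⁻¹) volume (-a) a :=
    hint2.const_mul _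
  -- split the integral
  have hsplit : (∫ s in (-a)..a, (L s - L a) / ((s : ℂ) - k)) =
      (∫ s in (-a)..a, (L s - L σ) / ((s : ℂ) - k)) +
        (L σ - L a) * (∫ s in (-a)..a, ((s : ℂ) - k)⁻¹) := by
    rw [← intervalIntegral.integral_const_mul, ← intervalIntegral.integral_add hint1 hint2']
    refine intervalIntegral.integral_congr fun s hs => ?_
    have h1 : L s - L a = (L s - L σ) + (L σ - L a) := by ring
    rw [h1, add_div, div_eq_mul_inv, div_eq_mul_inv]
  -- bound the first integral
  have hb1 : ‖∫ s in (-a)..a, (L s - L σ) / ((s : ℂ) - k)‖ ≤ M * |a - (-a)| := by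
    refine intervalIntegral.norm_integral_le_of_norm_le_const fun s hs => ?_
    rw [uIoc_of_le haa] at hs
    have hs' : s ∈ Icc (-a) a := Ioc_subset_Icc_self hs
    have h1 : ‖L s - L σ‖ ≤ M * |s - σ| := hlip σ (hsubset hσ) s (hsubset hs')
    have h2 : |s - σ| ≤ |s - k.re| := clamp_le hs'
    have h3 : |s - k.re| ≤ ‖(s : ℂ) - k‖ := by
      have := Complex.abs_re_le_norm ((s : ℂ) - k)
      simpa using this
    have hd : 0 < ‖(s : ℂ) - k‖ :=
      norm_pos_iff.mpr (sub_ne_zero.2 (hk s hs'))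
    rw [norm_div, div_le_iff₀ hd]
    calc ‖L s - L σ‖ ≤ M * |s - σ| := h1
      _ ≤ M * ‖(s : ℂ) - k‖ :=
        mul_le_mul_of_nonneg_left (h2.trans h3) hM0
  -- bound the second integral (the log term)
  obtain ⟨A, B, hAt, hBu, hI2eq⟩ := integral_inv_eq a ha k hk
  have hI2 : ‖∫ s in (-a)..a, ((s : ℂ) - k)⁻¹‖ ≤
      |Real.log t - Real.log u| + 2 * Real.pi := by
    rw [hI2eq]
    have := abs_log_sub_log_le A B
    rwa [hAt, hBu] at this
  have hlog : (a - σ) * |Real.log t - Real.log u| ≤ 8 * a := by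
    rcases le_total t u with h | h
    · have h0 : Real.log t ≤ Real.log u := Real.log_le_log ht h
      rw [abs_of_nonpos (by linarith), neg_sub, ← Real.log_div hu0.ne' ht.ne']
      have h4 : Real.log (u / t) ≤ u / t - 1 := Real.log_le_sub_one_of_pos (by positivity)
      have h5 : u / t ≤ (t + 2 * a) / t := (div_le_div_iff_of_pos_right ht).mpr hut
      have h6 : 0 ≤ Real.log (u / t) := Real.log_nonneg ((one_le_div ht).mpr h)
      have h7 : (a - σ) * Real.log (u / t) ≤ t * ((t + 2 * a) / t - 1) :=
        mul_le_mul hσa (h4.trans (by linarith)) h6 ht.le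
      have h8 : t * ((t + 2 * a) / t - 1) = 2 * a := by field_simp; ring
      linarith
    · have h0 : Real.log u ≤ Real.log t := Real.log_le_log hu0 h
      rw [abs_of_nonneg (by linarith), ← Real.log_div ht.ne' hu0.ne']
      have h4 : Real.log (t / u) ≤ t / u - 1 := Real.log_le_sub_one_of_pos (by positivity)
      have h5 : t / u ≤ 5 := by rw [div_le_iff₀ hu0]; nlinarith
      have h6 : 0 ≤ Real.log (t / u) := Real.log_nonneg ((one_le_div hu0).mpr h)
      have h7 : (a - σ) * Real.log (t / u) ≤ (2 * a) * 4 :=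
        mul_le_mul hσ2a (by linarith) h6 (by linarith)
      linarith
  have hb2 : ‖(L σ - L a) * (∫ s in (-a)..a, ((s : ℂ) - k)⁻¹)‖ ≤ 24 * (a * M) := by
    rw [norm_mul]
    have h1 : ‖L σ - L a‖ * ‖∫ s in (-a)..a, ((s : ℂ) - k)⁻¹‖ ≤
        (M * (a - σ)) * (|Real.log t - Real.log u| + 2 * Real.pi) :=
      mul_le_mul hc hI2 (norm_nonneg _) (by positivity)
    have hπ := Real.pi_le_four
    have hπ0 := Real.pi_pos
    have h2 := mul_le_mul_of_nonneg_left hlog hM0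
    have h3 := mul_le_mul_of_nonneg_left hσ2a hM0
    nlinarith [abs_nonneg (Real.log t - Real.log u), mul_nonneg hM0 hσ0, ha.le]
  have hbig : ‖∫ s in (-a)..a, (L s - L a) / ((s : ℂ) - k)‖ ≤ 26 * (a * M) := by
    rw [hsplit]
    calc ‖(∫ s in (-a)..a, (L s - L σ) / ((s : ℂ) - k)) +
          (L σ - L a) * (∫ s in (-a)..a, ((s : ℂ) - k)⁻¹)‖
        ≤ ‖∫ s in (-a)..a, (L s - L σ) / ((s : ℂ) - k)‖ +
          ‖(L σ - L a) * (∫ s in (-a)..a, ((s : ℂ) - k)⁻¹)‖ :=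
        norm_add_le _ _
      _ ≤ M * |a - (-a)| + 24 * (a * M) := add_le_add hb1 hb2
      _ = 26 * (a * M) := by rw [abs_of_nonneg (by linarith : (0:ℝ) ≤ a - (-a))]; ring
  have hfinal : ‖chi L ζ k‖ =
      (2 * Real.pi)⁻¹ * ‖∫ s in (-a)..a, (L s - L a) / ((s : ℂ) - k)‖ := by
    rw [chi]
    rw [norm_mul, norm_inv]
    have habs : ‖2 * (Real.pi : ℂ) * Complex.I‖ = 2 * Real.pi := by
      simp [Complex.norm_real,
        abs_of_nonneg Real.pi_pos.le]
    rw [habs, ← hadef]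
  rw [hfinal]
  have h2π : 1 ≤ 2 * Real.pi := by linarith [Real.pi_gt_three]
  calc (2 * Real.pi)⁻¹ * ‖∫ s in (-a)..a, (L s - L a) / ((s : ℂ) - k)‖
      ≤ 1 * ‖∫ s in (-a)..a, (L s - L a) / ((s : ℂ) - k)‖ :=
      mul_le_mul_of_nonneg_right (inv_le_one_of_one_le₀ h2π) (norm_nonneg _)
    _ = ‖∫ s in (-a)..a, (L s - L a) / ((s : ℂ) - k)‖ := one_mul _
    _ ≤ 26 * (a * M) := hbig
    _ ≤ 26 * (K * M) := by
      have := mul_le_mul_of_nonneg_right haK hM0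
      linarith
    _ ≤ 26 * (M + 1) * (K + 1) := by
      have h1 : 26 * (M + 1) * (K + 1) = 26 * (K * M) + 26 * (K + M + 1) := by ring
      linarith [hK0.le, hM0]
end
end

section
/- There exists a constant C > 0 such that for all ζ ∈ [−N, 0) and all k = k₀ + u e^{iπ/4} with 0 < u ≤ k₀/2, one has |e^{−2χ(ζ,k)} − e^{−2χ(ζ,k₀)}| ≤ C |k − k₀| (k₀⁻¹ + |ln |k − k₀||). (This is estimate (4.42) used in the proof of the paper's Lemma 4.2; the extra k₀⁻¹ term distinguishes it from the corresponding local-case estimate.) -/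
open Set MeasureTheory

noncomputable section

/-- `e^{iπ/4}`. -/
def e4 : ℂ := Complex.exp (Real.pi * Complex.I / 4)

lemma e4_re : e4.re = Real.sqrt 2 / 2 := by
  have h : (Real.pi : ℂ) * Complex.I / 4 = ((Real.pi / 4 : ℝ) : ℂ) * Complex.I := by
    push_cast; ring
  rw [e4, h, Complex.exp_ofReal_mul_I_re, Real.cos_pi_div_four]

lemma e4_im : e4.im = Real.sqrt 2 / 2 := by
  have h : (Real.pi : ℂ) * Complex.I / 4 = ((Real.pi / 4 : ℝ) : ℂ) * Complex.I := by
    push_cast; ring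
  rw [e4, h, Complex.exp_ofReal_mul_I_im, Real.sin_pi_div_four]

lemma abs_e4 : ‖e4‖ = 1 := by
  rw [e4, Complex.norm_exp]
  norm_num

set_option maxHeartbeats 1000000 in
/-- Estimate (4.42): |e^{-2χ(ζ,k)} - e^{-2χ(ζ,k₀)}| ≤ C|k-k₀|(k₀⁻¹ + |ln|k-k₀||)
for k = k₀ + u e^{iπ/4}, 0 < u ≤ k₀/2, uniformly in ζ ∈ [-N, 0). -/
theorem exp_chi_difference_estimate (N : ℝ) (hN : 0 < N) (L : ℝ → ℂ)
    (hL : ContDiffOn ℝ 1 L (Icc (-Real.sqrt (N / 12)) (Real.sqrt (N / 12))))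
    (hsym : ∀ s ∈ Icc (-Real.sqrt (N / 12)) (Real.sqrt (N / 12)),
      L (-s) = starRingEnd ℂ (L s)) :
    ∃ C : ℝ, 0 < C ∧ ∀ ζ ∈ Ico (-N) (0 : ℝ), ∀ u : ℝ, 0 < u → u ≤ k0 ζ / 2 →
      ‖Complex.exp (-(2 * chi L ζ ((k0 ζ : ℂ) + (u : ℂ) * e4))) -
          Complex.exp (-(2 * chi L ζ (k0 ζ : ℂ)))‖ ≤
        C * ‖((k0 ζ : ℂ) + (u : ℂ) * e4) - (k0 ζ : ℂ)‖ *
          ((k0 ζ)⁻¹ + |Real.log ‖((k0 ζ : ℂ) + (u : ℂ) * e4) - (k0 ζ : ℂ)‖|) := by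
  set K : ℝ := Real.sqrt (N / 12) with hKdef
  have hKpos : 0 < K := Real.sqrt_pos.2 (by positivity)
  have hsqrt2 : (1 : ℝ) ≤ Real.sqrt 2 := by
    nlinarith [Real.sq_sqrt (by norm_num : (0:ℝ) ≤ 2), Real.sqrt_nonneg 2]
  have hsqrt2pos : (0 : ℝ) < Real.sqrt 2 := by linarith
  -- Lipschitz bound for L on Icc (-K) K
  obtain ⟨M, hM0, hMb⟩ : ∃ M : ℝ, 0 ≤ M ∧ ∀ x ∈ Icc (-K) K, ∀ y ∈ Icc (-K) K,
      ‖L x - L y‖ ≤ M * |x - y| := by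
    have hUD : UniqueDiffOn ℝ (Icc (-K) K) := uniqueDiffOn_Icc (by linarith)
    have hcont := hL.continuousOn_derivWithin hUD le_rfl
    obtain ⟨M, hMb⟩ := (isCompact_Icc (a := -K) (b := K)).exists_bound_of_continuousOn hcont
    refine ⟨max M 0, le_max_right _ _, fun x hx y hy => ?_⟩
    have h := (convex_Icc (-K) K).norm_image_sub_le_of_norm_derivWithin_le (C := max M 0)
      (hL.differentiableOn one_ne_zero) (fun z hz => (hMb z hz).trans (le_max_left M 0)) hy hx
    simpa [Real.norm_eq_abs] using h
  -- constants
  set A : ℝ := |Real.log (3 * K)| with hAdef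
  have hA0 : 0 ≤ A := abs_nonneg _
  set B : ℝ := A * K + 1 with hBdef
  have hB1 : (1 : ℝ) ≤ B := by nlinarith
  have hB0 : 0 < B := by linarith
  set Cd : ℝ := Real.sqrt 2 * M * B / (2 * Real.pi) with hCddef
  have hCd0 : 0 ≤ Cd := by
    apply div_nonneg
    · exact mul_nonneg (mul_nonneg (Real.sqrt_nonneg 2) hM0) hB0.le
    · positivity
  set E : ℝ := Cd * (3 / 2 + K ^ 2) with hEdef
  have hE0 : 0 ≤ E := by nlinarith
  set F : ℝ := M * K / Real.pi with hFdef
  have hF0 : 0 ≤ F := by positivity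
  set P : ℝ := Real.exp (2 * F) * (Real.exp (2 * E) + 2) * (2 * Cd) with hPdef
  have hP0 : 0 ≤ P := by
    apply mul_nonneg (mul_nonneg (Real.exp_pos _).le (by positivity)) (by linarith)
  clear_value A B Cd E F P
  refine ⟨P + 1, by linarith, ?_⟩
  rintro ζ ⟨hζ1, hζ2⟩ u hu hur
  set r : ℝ := k0 ζ with hrdef
  have hr : 0 < r := by
    have : (0:ℝ) < -ζ / 12 := by linarith
    exact Real.sqrt_pos.2 this
  have hrK : r ≤ K := by
    have : -ζ / 12 ≤ N / 12 := by linarith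
    exact Real.sqrt_le_sqrt this
  have hrr : -r ≤ r := by linarith
  have hsubIcc : Icc (-r) r ⊆ Icc (-K) K := Icc_subset_Icc (by linarith) hrK
  have hrmem : r ∈ Icc (-K) K := ⟨by linarith, hrK⟩
  set k : ℂ := (r : ℂ) + (u : ℂ) * e4 with hkdef
  -- basic facts about k
  have hkim : k.im = u * (Real.sqrt 2 / 2) := by
    simp [hkdef, Complex.add_im, Complex.mul_im, e4_im, e4_re]
  have hksub : k - (r : ℂ) = (u : ℂ) * e4 := by ring
  have habsk : ‖k - (r : ℂ)‖ = u := by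
    rw [hksub, norm_mul, abs_e4, Complex.norm_real, Real.norm_eq_abs, abs_of_pos hu, mul_one]
  have hne : ∀ s : ℝ, (s : ℂ) - k ≠ 0 := by
    intro s h
    have h1 : ((s : ℂ) - k).im = 0 := by rw [h]; simp
    rw [Complex.sub_im, Complex.ofReal_im, hkim] at h1
    nlinarith
  -- lower bound on |s - k|
  have hlow : ∀ s ∈ Icc (-r) r, (r - s + u) / Real.sqrt 2 ≤ ‖(s : ℂ) - k‖ := by
    intro s hs
    have hs2 : s ≤ r := hs.2
    have h2 : Real.sqrt 2 ^ 2 = 2 := Real.sq_sqrt (by norm_num)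
    rw [Complex.norm_def,
      Real.le_sqrt (div_nonneg (by linarith) (Real.sqrt_nonneg 2)) (Complex.normSq_nonneg _)]
    have hre : ((s : ℂ) - k).re = s - (r + u * (Real.sqrt 2 / 2)) := by
      simp [hkdef, Complex.add_re, Complex.mul_re, e4_re, e4_im]
    have him : ((s : ℂ) - k).im = -(u * (Real.sqrt 2 / 2)) := by
      simp [hkdef, Complex.add_im, Complex.mul_im, e4_re, e4_im]
    rw [Complex.normSq_apply, hre, him, div_pow, h2]
    have hcross : 0 ≤ (r - s) * u := mul_nonneg (by linarith) hu.le
    nlinarith [sq_nonneg (r - s), sq_nonneg u]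
  -- the two integrands
  set f1 : ℝ → ℂ := fun s => (L s - L r) / ((s : ℂ) - k) with hf1def
  set f2 : ℝ → ℂ := fun s => (L s - L r) / ((s : ℂ) - (r : ℂ)) with hf2def
  set big : ℝ → ℂ := fun s =>
    (L s - L r) * (k - (r : ℂ)) / (((s : ℂ) - k) * ((s : ℂ) - (r : ℂ))) with hbigdef
  have hpt : ∀ s : ℝ, f1 s - f2 s = big s := by
    intro s
    by_cases hsr : s = r
    · simp only [hf1def, hf2def, hbigdef, hsr, sub_self, zero_div, zero_mul, sub_zero]
    · have h1 : (s : ℂ) - k ≠ 0 := hne s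
      have h2 : (s : ℂ) - (r : ℂ) ≠ 0 := by
        rw [sub_ne_zero]
        exact_mod_cast hsr
      simp only [hf1def, hf2def, hbigdef]
      field_simp
      ring
  -- pointwise bound on f2
  have hf2bd : ∀ s ∈ Icc (-r) r, ‖f2 s‖ ≤ M := by
    intro s hs
    by_cases hsr : s = r
    · simp [hf2def, hsr, hM0]
    · have h2 : |s - r| > 0 := abs_pos.2 (sub_ne_zero.2 hsr)
      have : ‖((s : ℂ) - (r : ℂ))‖ = |s - r| := by
        rw [← Complex.ofReal_sub, Complex.norm_real, Real.norm_eq_abs]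
      rw [hf2def]
      simp only
      rw [norm_div, this, div_le_iff₀ h2]
      exact hMb s (hsubIcc hs) r hrmem
  -- integrability of f1
  have hint1 : IntervalIntegrable f1 volume (-r) r := by
    apply ContinuousOn.intervalIntegrable
    rw [uIcc_of_le hrr]
    apply ContinuousOn.div
    · exact (hL.continuousOn.mono hsubIcc).sub continuousOn_const
    · exact (Complex.continuous_ofReal.continuousOn).sub continuousOn_const
    · intro s _; exact hne s
  -- integrability of f2
  have hint2 : IntervalIntegrable f2 volume (-r) r := by
    rw [intervalIntegrable_iff_integrableOn_Ioc_of_le hrr]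
    apply Integrable.mono' (g := fun _ => M)
      (integrableOn_const measure_Ioc_lt_top.ne)
    · apply AEMeasurable.aestronglyMeasurable
      have h1 : AEMeasurable L (volume.restrict (Ioc (-r) r)) :=
        (hL.continuousOn.mono (Ioc_subset_Icc_self.trans hsubIcc)).aemeasurable
          measurableSet_Ioc
      exact (h1.sub aemeasurable_const).div
        ((Complex.measurable_ofReal.sub measurable_const).aemeasurable)
    · filter_upwards [ae_restrict_mem measurableSet_Ioc] with s hs
      exact hf2bd s (Ioc_subset_Icc_self hs)
  -- chi difference as a single integral
  have hchieq : chi L ζ k - chi L ζ (r : ℂ) =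
      (2 * Real.pi * Complex.I)⁻¹ * ∫ s in (-r)..r, big s := by
    rw [chi, chi, ← mul_sub]
    congr 1
    rw [← intervalIntegral.integral_sub hint1 hint2]
    apply intervalIntegral.integral_congr
    intro s _
    exact hpt s
  -- norm of the prefactor
  have hpre : ‖((2 * Real.pi * Complex.I : ℂ))⁻¹‖ = (2 * Real.pi)⁻¹ := by
    rw [norm_inv]
    simp [norm_mul, Complex.norm_I,
      Complex.norm_real, abs_of_pos Real.pi_pos]
  -- the comparison function
  set g : ℝ → ℝ := fun s => Real.sqrt 2 * M * u * (r + u - s)⁻¹ with hgdef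
  have hgpos : ∀ s ∈ Icc (-r) r, 0 < r + u - s := by
    intro s hs; have := hs.2; linarith
  have hgint : IntervalIntegrable g volume (-r) r := by
    apply ContinuousOn.intervalIntegrable
    rw [uIcc_of_le hrr]
    apply ContinuousOn.mul continuousOn_const
    apply ContinuousOn.inv₀
    · fun_prop
    · intro s hs; exact (hgpos s hs).ne'
  -- |big s| ≤ g s on the interval
  have hbigbd : ∀ s ∈ Icc (-r) r, ‖big s‖ ≤ g s := by
    intro s hs
    have hgs0 : 0 ≤ g s := by
      have := hgpos s hs
      apply mul_nonneg (by positivity) (by positivity)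
    by_cases hsr : s = r
    · have hz : ((s : ℂ) - (r : ℂ)) = 0 := by rw [hsr]; exact sub_self _
      simp only [hbigdef]
      rw [hz, mul_zero, div_zero, norm_zero]
      exact hgs0
    · have habsr : ‖((s : ℂ) - (r : ℂ))‖ = |s - r| := by
        rw [← Complex.ofReal_sub, Complex.norm_real, Real.norm_eq_abs]
      have hsr' : 0 < |s - r| := abs_pos.2 (sub_ne_zero.2 hsr)
      have hlows := hlow s hs
      have hpos1 : 0 < (r - s + u) / Real.sqrt 2 := by
        have := hs.2
        apply div_pos (by linarith) hsqrt2pos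
      have hlows' : (r - s + u) / Real.sqrt 2 ≤ ‖(s : ℂ) - k‖ := by
        exact hlows
      have habsk' : ‖k - (r : ℂ)‖ = u := by exact habsk
      rw [hbigdef]
      simp only
      rw [norm_div, norm_mul, norm_mul, habsr]
      calc ‖L s - L r‖ * ‖k - (r:ℂ)‖ / (‖(s:ℂ) - k‖ * |s - r|)
          ≤ (M * |s - r|) * u / (((r - s + u) / Real.sqrt 2) * |s - r|) := by
            apply div_le_div₀ (by positivity)
            · apply mul_le_mul _ _ (norm_nonneg _) (by positivity)
              · exact hMb s (hsubIcc hs) r hrmem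
              · exact le_of_eq habsk'
            · exact mul_pos hpos1 hsr'
            · exact mul_le_mul_of_nonneg_right hlows' (abs_nonneg _)
        _ = g s := by
            rw [hgdef]
            have h1 : r - s + u ≠ 0 := by have := hs.2; intro h; nlinarith
            have h2 : r + u - s ≠ 0 := by intro h; apply h1; linarith
            field_simp
            ring
  -- value of the comparison integral
  have hgval : ∫ s in (-r)..r, g s =
      Real.sqrt 2 * M * u * (Real.log (2 * r + u) - Real.log u) := by
    rw [hgdef]
    simp only
    rw [intervalIntegral.integral_const_mul]
    congr 1
    have h1 := intervalIntegral.integral_comp_sub_left (a := -r) (b := r)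
      (fun x : ℝ => x⁻¹) (r + u)
    rw [show r + u - r = u by ring, show r + u - -r = 2 * r + u by ring] at h1
    rw [h1, integral_inv_of_pos hu (by linarith), Real.log_div (by positivity) (by positivity)]
  have hgnonneg : 0 ≤ ∫ s in (-r)..r, g s := by
    rw [hgval]
    have hlog : Real.log u ≤ Real.log (2 * r + u) :=
      Real.log_le_log (by positivity) (by linarith)
    have : 0 ≤ Real.log (2 * r + u) - Real.log u := by linarith
    positivity
  -- main chi-difference bound
  have hchibd : ‖chi L ζ k - chi L ζ (r : ℂ)‖ ≤
      (2 * Real.pi)⁻¹ * (Real.sqrt 2 * M * u * (Real.log (2 * r + u) - Real.log u)) := by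
    rw [hchieq, norm_mul, hpre]
    apply mul_le_mul_of_nonneg_left _ (by positivity)
    calc ‖∫ s in (-r)..r, big s‖ ≤ |∫ s in (-r)..r, g s| := by
          apply intervalIntegral.norm_integral_le_abs_of_norm_le _ hgint
          filter_upwards [ae_restrict_mem measurableSet_uIoc] with s hs
          apply hbigbd s
          rw [uIoc_of_le hrr] at hs
          exact Ioc_subset_Icc_self hs
      _ = Real.sqrt 2 * M * u * (Real.log (2 * r + u) - Real.log u) := by
          rw [abs_of_nonneg hgnonneg, hgval]
  -- log estimate
  have hlogbd : Real.log (2 * r + u) - Real.log u ≤ B * (r⁻¹ + |Real.log u|) := by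
    have h1 : Real.log (2 * r + u) ≤ A := by
      rw [hAdef]
      refine le_trans (Real.log_le_log (by positivity) ?_) (le_abs_self _)
      linarith
    have h2 : -Real.log u ≤ |Real.log u| := neg_le_abs _
    have h3 : (1 : ℝ) ≤ K * r⁻¹ := by
      rw [← div_eq_mul_inv, le_div_iff₀ hr]
      linarith
    have h4 : A ≤ A * K * r⁻¹ := by nlinarith
    have h5 : 0 < r⁻¹ := by positivity
    have h6 : 0 ≤ |Real.log u| := abs_nonneg _
    have hnl : -Real.log u ≤ |Real.log u| := neg_le_abs _
    nlinarith
  -- final chi-difference bound with the right shape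
  have hchifinal : ‖chi L ζ k - chi L ζ (r : ℂ)‖ ≤ Cd * (u * (r⁻¹ + |Real.log u|)) := by
    calc ‖chi L ζ k - chi L ζ (r : ℂ)‖
        ≤ (2 * Real.pi)⁻¹ * (Real.sqrt 2 * M * u * (Real.log (2 * r + u) - Real.log u)) :=
          hchibd
      _ ≤ (2 * Real.pi)⁻¹ * (Real.sqrt 2 * M * u * (B * (r⁻¹ + |Real.log u|))) := by
          apply mul_le_mul_of_nonneg_left _ (by positivity)
          apply mul_le_mul_of_nonneg_left hlogbd (by positivity)
      _ = Cd * (u * (r⁻¹ + |Real.log u|)) := by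
          rw [hCddef]; field_simp
  -- uniform bound on chi difference
  have huniform : u * (r⁻¹ + |Real.log u|) ≤ 3 / 2 + K ^ 2 := by
    have h1 : u * r⁻¹ ≤ 1 / 2 := by
      rw [← div_eq_mul_inv, div_le_iff₀ hr]
      linarith
    have h2 : u * |Real.log u| ≤ 1 + K ^ 2 := by
      rcases le_or_gt u 1 with h | h
      · have := Real.abs_log_mul_self_lt u hu h
        rw [abs_mul, abs_of_pos hu] at this
        nlinarith [abs_nonneg (Real.log u), sq_nonneg K]
      · have hlog : |Real.log u| = Real.log u := abs_of_pos (Real.log_pos h)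
        have h3 : Real.log u ≤ u - 1 := Real.log_le_sub_one_of_pos (by linarith)
        have h4 : u ≤ K := by linarith
        nlinarith
    rw [mul_add]
    linarith
  have hchiE : ‖chi L ζ k - chi L ζ (r : ℂ)‖ ≤ E := by
    rw [hEdef]
    refine hchifinal.trans ?_
    exact mul_le_mul_of_nonneg_left huniform hCd0
  -- bound on chi at k0
  have hchik0 : ‖chi L ζ (r : ℂ)‖ ≤ F := by
    rw [chi, norm_mul, hpre]
    have h1 : ‖∫ s in (-r)..r, (L s - L r) / ((s : ℂ) - (r : ℂ))‖ ≤ M * |r - (-r)| := by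
      apply intervalIntegral.norm_integral_le_of_norm_le_const
      intro s hs
      rw [uIoc_of_le hrr] at hs
      exact hf2bd s (Ioc_subset_Icc_self hs)
    have h2 : |r - (-r)| = 2 * r := by rw [abs_of_nonneg (by linarith)]; ring
    rw [h2] at h1
    calc (2 * Real.pi)⁻¹ * ‖∫ s in (-r)..r, (L s - L r) / ((s : ℂ) - (r : ℂ))‖
        ≤ (2 * Real.pi)⁻¹ * (M * (2 * r)) := by
          apply mul_le_mul_of_nonneg_left h1 (by positivity)
      _ ≤ (2 * Real.pi)⁻¹ * (M * (2 * K)) := by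
          apply mul_le_mul_of_nonneg_left _ (by positivity)
          exact mul_le_mul_of_nonneg_left (by linarith) hM0
      _ = F := by rw [hFdef, div_eq_mul_inv, mul_inv]; ring
  -- assemble the exponential estimate
  set a : ℂ := -(2 * chi L ζ k) with hadef
  set b : ℂ := -(2 * chi L ζ (r : ℂ)) with hbdef
  clear_value a b
  have hdiff : Complex.exp a - Complex.exp b = Complex.exp b * (Complex.exp (a - b) - 1) := by
    rw [mul_sub, ← Complex.exp_add, mul_one]
    congr 2
    ring
  have hDelta : ‖a - b‖ = 2 * ‖chi L ζ k - chi L ζ (r : ℂ)‖ := by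
    have : a - b = -(2 * (chi L ζ k - chi L ζ (r : ℂ))) := by rw [hadef, hbdef]; ring
    rw [this, norm_neg, norm_mul]
    norm_num
  have hDeltaE : ‖a - b‖ ≤ 2 * E := by
    rw [hDelta]; linarith
  have hDeltabd : ‖a - b‖ ≤ 2 * Cd * (u * (r⁻¹ + |Real.log u|)) := by
    rw [hDelta]
    calc 2 * ‖chi L ζ k - chi L ζ (r : ℂ)‖ ≤ 2 * (Cd * (u * (r⁻¹ + |Real.log u|))) := by
          linarith
      _ = 2 * Cd * (u * (r⁻¹ + |Real.log u|)) := by ring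
  have hexpb : ‖Complex.exp b‖ ≤ Real.exp (2 * F) := by
    rw [Complex.norm_exp]
    apply Real.exp_le_exp.2
    calc b.re ≤ ‖b‖ := Complex.re_le_norm b
      _ = ‖b‖ := rfl
      _ = 2 * ‖chi L ζ (r : ℂ)‖ := by rw [hbdef, norm_neg, norm_mul]; norm_num
      _ ≤ 2 * F := by linarith
  have hexpd : ‖Complex.exp (a - b) - 1‖ ≤ (Real.exp (2 * E) + 2) * ‖a - b‖ := by
    rcases le_or_gt ‖a - b‖ 1 with h | h
    · have h1 : ‖a - b‖ ≤ 1 := by exact h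
      have := Complex.norm_exp_sub_one_le h1
      calc ‖Complex.exp (a - b) - 1‖ ≤ 2 * ‖a - b‖ := this
        _ ≤ (Real.exp (2 * E) + 2) * ‖a - b‖ := by
            apply mul_le_mul_of_nonneg_right _ (norm_nonneg _)
            linarith [Real.exp_pos (2 * E)]
    · have h1 : ‖Complex.exp (a - b) - 1‖ ≤ ‖Complex.exp (a - b)‖ + 1 := by
        calc ‖Complex.exp (a - b) - 1‖ ≤ ‖Complex.exp (a - b)‖ + ‖(1 : ℂ)‖ := norm_sub_le _ _
          _ = ‖Complex.exp (a - b)‖ + 1 := by norm_num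
      have h2 : ‖Complex.exp (a - b)‖ ≤ Real.exp (2 * E) := by
        rw [Complex.norm_exp]
        apply Real.exp_le_exp.2
        calc (a - b).re ≤ ‖a - b‖ := Complex.re_le_norm _
          _ = ‖a - b‖ := rfl
          _ ≤ 2 * E := hDeltaE
      calc ‖Complex.exp (a - b) - 1‖ ≤ Real.exp (2 * E) + 1 := by linarith
        _ ≤ (Real.exp (2 * E) + 1) * ‖a - b‖ := by
            apply le_mul_of_one_le_right (by positivity) h.le
        _ ≤ (Real.exp (2 * E) + 2) * ‖a - b‖ := by
            apply mul_le_mul_of_nonneg_right (by linarith) (norm_nonneg _)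
  -- final computation
  have hfinal : ‖Complex.exp a - Complex.exp b‖ ≤ P * (u * (r⁻¹ + |Real.log u|)) := by
    rw [hdiff, norm_mul]
    calc ‖Complex.exp b‖ * ‖Complex.exp (a - b) - 1‖
        ≤ Real.exp (2 * F) * ((Real.exp (2 * E) + 2) * ‖a - b‖) := by
          apply mul_le_mul hexpb hexpd (norm_nonneg _) (Real.exp_pos _).le
      _ ≤ Real.exp (2 * F) * ((Real.exp (2 * E) + 2) * (2 * Cd * (u * (r⁻¹ + |Real.log u|)))) := by
          apply mul_le_mul_of_nonneg_left _ (Real.exp_pos _).le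
          apply mul_le_mul_of_nonneg_left hDeltabd (by positivity)
      _ = P * (u * (r⁻¹ + |Real.log u|)) := by rw [hPdef]; ring
  -- translate to the goal
  rw [habsk]
  have huk : 0 ≤ u * (r⁻¹ + |Real.log u|) := by positivity
  calc ‖Complex.exp a - Complex.exp b‖
      = ‖Complex.exp a - Complex.exp b‖ := rfl
    _ ≤ P * (u * (r⁻¹ + |Real.log u|)) := hfinal
    _ ≤ (P + 1) * (u * (r⁻¹ + |Real.log u|)) :=
        mul_le_mul_of_nonneg_right (by linarith) huk
    _ = (P + 1) * u * (r⁻¹ + |Real.log u|) := by ring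
end
end

section
/- Let x, t ∈ ℝ, k ∈ ℂ, let v₁, v₂ ∈ ℂ² and a₁, a₂, b ∈ ℂ with a₁ ≠ 0, a₂ ≠ 0 and a₁a₂ − b² = 1. Set w₁ := a₁v₁ + b v₂ and w₂ := b v₁ + a₂ v₂, put θ := ikx + 4ik³t and E := e^{θ}, and define the 2×2 matrices M₊ := (w₁/a₁ | v₂)·diag(E, E⁻¹) and M₋ := (v₁ | w₂/a₂)·diag(E, E⁻¹) (columns as indicated). Then M₊ = M₋ J, where J := diag(E⁻¹, E) · [[1 − r₁r₂, −r₂],[r₁, 1]] · diag(E, E⁻¹) with r₁ := b/a₁ and r₂ := b/a₂. (This is the jump relation (2.15) with jump matrix (2.18) for the Riemann–Hilbert problem associated with the nonlocal mKdV equation, derived from the scattering relation Φ₁ = Φ₂S.) -/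
open Matrix

noncomputable section

/-- The 2×2 matrix with columns `u` and `v`. -/
def colMat (u v : Fin 2 → ℂ) : Matrix (Fin 2) (Fin 2) ℂ :=
  Matrix.of fun i j => ![u i, v i] j

set_option maxHeartbeats 1000000 in
/-- The jump relation (2.15) with jump matrix (2.18), derived from the
scattering relation Φ₁ = Φ₂S with S = [[a₁,b],[b,a₂]], det S = 1. -/
theorem jump_relation (x t : ℝ) (k : ℂ) (v₁ v₂ : Fin 2 → ℂ) (a₁ a₂ b : ℂ)
    (ha₁ : a₁ ≠ 0) (ha₂ : a₂ ≠ 0) (hdet : a₁ * a₂ - b ^ 2 = 1)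
    (w₁ w₂ : Fin 2 → ℂ) (hw₁ : w₁ = a₁ • v₁ + b • v₂) (hw₂ : w₂ = b • v₁ + a₂ • v₂)
    (θ : ℂ) (hθ : θ = Complex.I * k * (x : ℂ) + 4 * Complex.I * k ^ 3 * (t : ℂ))
    (E : ℂ) (hE : E = Complex.exp θ)
    (r₁ r₂ : ℂ) (hr₁ : r₁ = b / a₁) (hr₂ : r₂ = b / a₂)
    (Mp Mm J : Matrix (Fin 2) (Fin 2) ℂ)
    (hMp : Mp = colMat (a₁⁻¹ • w₁) v₂ * !![E, 0; 0, E⁻¹])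
    (hMm : Mm = colMat v₁ (a₂⁻¹ • w₂) * !![E, 0; 0, E⁻¹])
    (hJ : J = !![E⁻¹, 0; 0, E] * !![1 - r₁ * r₂, -r₂; r₁, 1] * !![E, 0; 0, E⁻¹]) :
    Mp = Mm * J := by
  have hEne : E ≠ 0 := by rw [hE]; exact Complex.exp_ne_zero θ
  subst hMp hMm hJ hw₁ hw₂ hr₁ hr₂
  ext i j
  fin_cases i <;> fin_cases j <;>
    simp [colMat, Matrix.mul_apply, Fin.sum_univ_succ] <;>
    field_simp <;> ring
end
end
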